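/- Let W ∈ R^{n_s×ℓ_s}, V ∈ R^{n_d×ℓ_d} have orthonormal columns, let J̃_k = v_k ⊛ J for each column v_k of V, and let W^T [J̃_1 … J̃_{ℓ_d}] = Φ Ω Ψ^T be an SVD. Then Γ = [φ_1 … φ_{ℓ_s - s}] solves argmax over Γ̃ ∈ R^{ℓ_s×(ℓ_s−s)} with orthonormal columns of ‖((W Γ̃)^T ⊗ V^T) J‖_F^2. -/
import Mathlib


open Matrix
open scoped BigOperators Kronecker

/-- Squared Frobenius norm of a real matrix. -/
def frobSq {α β : Type*} [Fintype α] [Fintype β] (A : Matrix α β ℝ) : ℝ :=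
  ∑ i, ∑ j, A i j ^ 2

/-- For `v ∈ ℝ^{n_d}`, `v ⊛ J ∈ ℝ^{n_s × n_p}` has `(j,k)` entry `vᵀ J_{j,k}`. -/
def circStarOp {nd ns np : ℕ} (v : Fin nd → ℝ) (J : Matrix (Fin ns × Fin nd) (Fin np) ℝ) :
    Matrix (Fin ns) (Fin np) ℝ :=
  Matrix.of fun j k => ∑ i, v i * J (j, i) k

/-- Rectangular "diagonal" matrix of singular values, the column index being a product
type enumerated by `finProdFinEquiv`. -/
def svDiagR (m : ℕ) (a b : ℕ) (ω : ℕ → ℝ) : Matrix (Fin m) (Fin a × Fin b) ℝ :=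
  Matrix.of fun i q => if (i : ℕ) = ((finProdFinEquiv q : Fin (a * b)) : ℕ) then ω i else 0

lemma frobSq_eq_trace {α β : Type*} [Fintype α] [Fintype β] (A : Matrix α β ℝ) :
    frobSq A = (A * Aᵀ).trace := by
  simp [frobSq, Matrix.trace, Matrix.mul_apply, Matrix.diag, sq]

lemma frobSq_mul_orth {α β : Type*} [Fintype α] [Fintype β] [DecidableEq β]
    (A : Matrix α β ℝ) (Q : Matrix β β ℝ) (hQ : Qᵀ * Q = 1) :
    frobSq (A * Qᵀ) = frobSq A := by
  rw [frobSq_eq_trace, frobSq_eq_trace, Matrix.transpose_mul, Matrix.transpose_transpose]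
  rw [Matrix.mul_assoc A, ← Matrix.mul_assoc Qᵀ Q Aᵀ, hQ, Matrix.one_mul]

lemma trace_mul_diagonal_mul_transpose {α β : Type*} [Fintype α] [Fintype β] [DecidableEq β]
    (B : Matrix α β ℝ) (σ : β → ℝ) :
    (B * Matrix.diagonal σ * Bᵀ).trace = ∑ i, σ i * ∑ a, B a i ^ 2 := by
  simp only [Matrix.trace, Matrix.diag, Matrix.mul_apply, Matrix.transpose_apply]
  rw [Finset.sum_comm]
  apply Finset.sum_congr rfl
  intro i _
  rw [Finset.mul_sum]
  apply Finset.sum_congr rfl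
  intro a _
  simp [Matrix.diagonal_apply, mul_ite, Finset.sum_ite_eq']
  ring

lemma svDiagR_mul_transpose (m a b : ℕ) (ω : ℕ → ℝ) :
    svDiagR m a b ω * (svDiagR m a b ω)ᵀ
      = Matrix.diagonal (fun i : Fin m => if (i : ℕ) < a * b then ω i ^ 2 else 0) := by
  ext i i'
  simp only [Matrix.mul_apply, svDiagR, Matrix.transpose_apply, Matrix.of_apply,
    Matrix.diagonal_apply]
  rw [show (∑ q : Fin a × Fin b,
        (if (i : ℕ) = ((finProdFinEquiv q : Fin (a*b)) : ℕ) then ω i else 0)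
        * (if (i' : ℕ) = ((finProdFinEquiv q : Fin (a*b)) : ℕ) then ω i' else 0))
      = ∑ t : Fin (a*b), (if (i : ℕ) = (t : ℕ) then ω i else 0)
        * (if (i' : ℕ) = (t : ℕ) then ω i' else 0) from
      Fintype.sum_equiv finProdFinEquiv _ _ (fun q => rfl)]
  by_cases h : i = i'
  · subst h
    simp only [if_pos rfl]
    by_cases hlt : (i : ℕ) < a * b
    · rw [if_pos hlt]
      have : ∀ t : Fin (a*b), ((i : ℕ) = (t : ℕ)) ↔ (t = ⟨(i:ℕ), hlt⟩) := by
        intro t; constructor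
        · intro ht; exact Fin.ext ht.symm
        · intro ht; subst ht; rfl
      calc ∑ t : Fin (a*b), (if (i:ℕ) = (t:ℕ) then ω i else 0) * (if (i:ℕ) = (t:ℕ) then ω i else 0)
          = ∑ t : Fin (a*b), (if t = ⟨(i:ℕ), hlt⟩ then ω i * ω i else 0) := by
            apply Finset.sum_congr rfl; intro t _
            simp only [this t]
            by_cases ht : t = ⟨(i:ℕ), hlt⟩ <;> simp [ht]
        _ = ω i * ω i := Finset.sum_ite_eq' _ _ _ |>.trans (by simp)
        _ = ω i ^ 2 := by ring
    · rw [if_neg hlt]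
      apply Finset.sum_eq_zero
      intro t _
      rw [if_neg, zero_mul]
      intro ht; exact hlt (ht ▸ t.isLt)
  · rw [if_neg h]
    apply Finset.sum_eq_zero
    intro t _
    by_cases ht : (i : ℕ) = (t : ℕ)
    · have ht2 : ¬ ((i' : ℕ) = (t : ℕ)) := fun ht' => h (Fin.ext (ht.trans ht'.symm))
      simp [ht2]
    · simp [ht]

lemma indicator_sum (n r : ℕ) (hr : r ≤ n) :
    ∑ i : Fin n, (if (i : ℕ) < r then (1 : ℝ) else 0) = r := by
  rw [Fin.sum_univ_eq_sum_range (fun k => if k < r then (1:ℝ) else 0)]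
  have : ∀ k, (if k < r then (1:ℝ) else 0) = if k ∈ Finset.range r then (1:ℝ) else 0 := by
    intro k; simp [Finset.mem_range]
  simp only [this]
  rw [Finset.sum_ite_mem, Finset.inter_eq_right.2 (Finset.range_subset_range.2 hr)]
  simp

lemma ky_fan_bound (n r : ℕ) (hr : r ≤ n) (σ : ℕ → ℝ)
    (hσ : ∀ i j : ℕ, i ≤ j → σ j ≤ σ i) (hσ0 : ∀ i, 0 ≤ σ i)
    (c : Fin n → ℝ) (hc0 : ∀ i, 0 ≤ c i) (hc1 : ∀ i, c i ≤ 1)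
    (hsum : ∑ i, c i = (r : ℝ)) :
    ∑ i : Fin n, σ (i : ℕ) * c i ≤ ∑ i : Fin n, σ (i : ℕ) * (if (i : ℕ) < r then 1 else 0) := by
  set d : Fin n → ℝ := fun i => if (i : ℕ) < r then 1 else 0 with hd
  have key : ∀ i : Fin n, σ (i:ℕ) * c i - σ (i:ℕ) * d i ≤ σ r * (c i - d i) := by
    intro i
    by_cases h : (i : ℕ) < r
    · have h1 : σ r ≤ σ (i:ℕ) := hσ _ _ (le_of_lt h)
      have : d i = 1 := if_pos h
      rw [this]
      nlinarith [hc1 i, hσ0 (i:ℕ)]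
    · have h1 : σ (i:ℕ) ≤ σ r := hσ _ _ (le_of_not_gt h)
      have : d i = 0 := if_neg h
      rw [this]
      nlinarith [hc0 i]
  have hdsum : ∑ i, d i = (r : ℝ) := indicator_sum n r hr
  have h2 : ∑ i : Fin n, (σ (i:ℕ) * c i - σ (i:ℕ) * d i) ≤ ∑ i : Fin n, σ r * (c i - d i) :=
    Finset.sum_le_sum (fun i _ => key i)
  rw [Finset.sum_sub_distrib] at h2
  rw [← Finset.mul_sum, Finset.sum_sub_distrib, hsum, hdsum, sub_self, mul_zero] at h2
  linarith

lemma kron_entry {nd ns np ls ld r : ℕ}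
    (J : Matrix (Fin ns × Fin nd) (Fin np) ℝ)
    (W : Matrix (Fin ns) (Fin ls) ℝ) (V : Matrix (Fin nd) (Fin ld) ℝ)
    (Γt : Matrix (Fin ls) (Fin r) ℝ) (a : Fin r) (b : Fin ld) (p : Fin np) :
    (((W * Γt)ᵀ ⊗ₖ Vᵀ) * J) (a, b) p
      = (Γtᵀ * (Wᵀ * (Matrix.of fun j (q : Fin ld × Fin np) =>
          circStarOp (fun i => V i q.1) J j q.2))) a (b, p) := by
  rw [← Matrix.mul_assoc, ← Matrix.transpose_mul]
  simp only [Matrix.mul_apply, Matrix.kroneckerMap_apply, Matrix.transpose_apply,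
    Matrix.of_apply, circStarOp]
  rw [Fintype.sum_prod_type]
  apply Finset.sum_congr rfl
  intro j _
  rw [Finset.mul_sum]
  apply Finset.sum_congr rfl
  intro i _
  ring

lemma master_formula {nd ns np ls ld r : ℕ}
    (J : Matrix (Fin ns × Fin nd) (Fin np) ℝ)
    (W : Matrix (Fin ns) (Fin ls) ℝ) (V : Matrix (Fin nd) (Fin ld) ℝ)
    (Φ : Matrix (Fin ls) (Fin ls) ℝ) (Ψ : Matrix (Fin ld × Fin np) (Fin ld × Fin np) ℝ)
    (ω : ℕ → ℝ) (hΨ : Ψᵀ * Ψ = 1)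
    (hSVD : Wᵀ * (Matrix.of fun j (q : Fin ld × Fin np) => circStarOp (fun i => V i q.1) J j q.2)
      = Φ * svDiagR ls ld np ω * Ψᵀ)
    (Γt : Matrix (Fin ls) (Fin r) ℝ) :
    frobSq (((W * Γt)ᵀ ⊗ₖ Vᵀ) * J)
      = ∑ i : Fin ls, (if (i : ℕ) < ld * np then ω i ^ 2 else 0)
          * ∑ a, ((Γtᵀ * Φ) a i) ^ 2 := by
  have step2 : frobSq (((W * Γt)ᵀ ⊗ₖ Vᵀ) * J)
      = frobSq (Γtᵀ * Φ * svDiagR ls ld np ω * Ψᵀ) := by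
    have hm : Γtᵀ * (Wᵀ * (Matrix.of fun j (q : Fin ld × Fin np) =>
        circStarOp (fun i => V i q.1) J j q.2)) = Γtᵀ * Φ * svDiagR ls ld np ω * Ψᵀ := by
      rw [hSVD]; simp only [Matrix.mul_assoc]
    simp only [frobSq]
    rw [Fintype.sum_prod_type]
    rw [show (∑ a : Fin r, ∑ q : Fin ld × Fin np,
          ((Γtᵀ * Φ * svDiagR ls ld np ω * Ψᵀ) a q) ^ 2)
        = ∑ a : Fin r, ∑ b : Fin ld, ∑ p : Fin np,
          ((Γtᵀ * Φ * svDiagR ls ld np ω * Ψᵀ) a (b, p)) ^ 2 from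
      Finset.sum_congr rfl (fun a _ => by rw [Fintype.sum_prod_type])]
    apply Finset.sum_congr rfl; intro a _
    apply Finset.sum_congr rfl; intro b _
    apply Finset.sum_congr rfl; intro p _
    rw [kron_entry, hm]
  rw [step2, frobSq_mul_orth _ Ψ hΨ, frobSq_eq_trace]
  have h3 : (Γtᵀ * Φ * svDiagR ls ld np ω) * (Γtᵀ * Φ * svDiagR ls ld np ω)ᵀ
      = (Γtᵀ * Φ) * (svDiagR ls ld np ω * (svDiagR ls ld np ω)ᵀ) * (Γtᵀ * Φ)ᵀ := by
    simp only [Matrix.transpose_mul, Matrix.mul_assoc]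
  rw [h3, svDiagR_mul_transpose]
  exact trace_mul_diagonal_mul_transpose _ _

/-- Let `W, V` have orthonormal columns, `J̃_b = v_b ⊛ J` for the columns `v_b` of `V`,
and let `Wᵀ [J̃_1 … J̃_{ℓ_d}] = Φ Ω Ψᵀ` be an SVD with decreasing singular values.
Then `Γ = [φ_1 … φ_{ℓ_s - s}]` maximizes `‖((W Γ̃)ᵀ ⊗ Vᵀ) J‖_F²` over all
`Γ̃ ∈ ℝ^{ℓ_s × (ℓ_s - s)}` with orthonormal columns. -/
theorem downdating_sources_optimal
    (nd ns np ls ld s : ℕ) (hs : s < ls)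
    (J : Matrix (Fin ns × Fin nd) (Fin np) ℝ)
    (W : Matrix (Fin ns) (Fin ls) ℝ) (V : Matrix (Fin nd) (Fin ld) ℝ)
    (hW : Wᵀ * W = 1) (hV : Vᵀ * V = 1)
    (Φ : Matrix (Fin ls) (Fin ls) ℝ) (Ψ : Matrix (Fin ld × Fin np) (Fin ld × Fin np) ℝ)
    (ω : ℕ → ℝ)
    (hΦ : Φᵀ * Φ = 1) (hΨ : Ψᵀ * Ψ = 1)
    (hword : ∀ i j : ℕ, i ≤ j → ω j ≤ ω i) (hw0 : ∀ i, 0 ≤ ω i)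
    (hSVD : Wᵀ * (Matrix.of fun j (q : Fin ld × Fin np) => circStarOp (fun i => V i q.1) J j q.2)
      = Φ * svDiagR ls ld np ω * Ψᵀ) :
    IsGreatest
      {x : ℝ | ∃ Γt : Matrix (Fin ls) (Fin (ls - s)) ℝ, Γtᵀ * Γt = 1 ∧
        x = frobSq (((W * Γt)ᵀ ⊗ₖ Vᵀ) * J)}
      (frobSq (((W * Φ.submatrix id (Fin.castLE (Nat.sub_le ls s)))ᵀ ⊗ₖ Vᵀ) * J)) := by
  set r := ls - s with hr
  set Γ0 : Matrix (Fin ls) (Fin r) ℝ := Φ.submatrix id (Fin.castLE (Nat.sub_le ls s)) with hΓ0def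
  set σ : ℕ → ℝ := fun k => if k < ld * np then ω k ^ 2 else 0 with hσdef
  have hΦΦt : Φ * Φᵀ = 1 := mul_eq_one_comm.mp hΦ
  -- entries of Γ0ᵀ * Φ
  have hB0 : ∀ (a : Fin r) (i : Fin ls),
      (Γ0ᵀ * Φ) a i = if (Fin.castLE (Nat.sub_le ls s) a) = i then (1:ℝ) else 0 := by
    intro a i
    have h1 : (Φᵀ * Φ) (Fin.castLE (Nat.sub_le ls s) a) i
        = (1 : Matrix (Fin ls) (Fin ls) ℝ) (Fin.castLE (Nat.sub_le ls s) a) i := by rw [hΦ]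
    rw [Matrix.one_apply] at h1
    rw [← h1]
    simp [Matrix.mul_apply, Matrix.submatrix_apply, hΓ0def]
  -- orthonormality of Γ0
  have hΓ0 : Γ0ᵀ * Γ0 = 1 := by
    ext a b
    have h1 : (Φᵀ * Φ) (Fin.castLE (Nat.sub_le ls s) a) (Fin.castLE (Nat.sub_le ls s) b)
        = (1 : Matrix (Fin ls) (Fin ls) ℝ) (Fin.castLE (Nat.sub_le ls s) a)
            (Fin.castLE (Nat.sub_le ls s) b) := by rw [hΦ]
    rw [Matrix.one_apply] at h1
    have h2 : (Γ0ᵀ * Γ0) a b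
        = (Φᵀ * Φ) (Fin.castLE (Nat.sub_le ls s) a) (Fin.castLE (Nat.sub_le ls s) b) := by
      simp [Matrix.mul_apply, Matrix.submatrix_apply, hΓ0def]
    rw [h2, h1, Matrix.one_apply]
    by_cases hab : a = b
    · simp [hab]
    · have : ¬ (Fin.castLE (Nat.sub_le ls s) a = Fin.castLE (Nat.sub_le ls s) b) := by
        intro h
        apply hab
        apply Fin.ext
        have h7 := congrArg Fin.val h
        simpa using h7
      simp [hab, this]
  -- candidate column masses
  have hc0val : ∀ i : Fin ls,
      (∑ a, ((Γ0ᵀ * Φ) a i) ^ 2) = if (i : ℕ) < r then (1:ℝ) else 0 := by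
    intro i
    by_cases h : (i : ℕ) < r
    · rw [if_pos h]
      have hcond : ∀ a : Fin r, (Fin.castLE (Nat.sub_le ls s) a = i) ↔ a = ⟨(i:ℕ), h⟩ := by
        intro a; constructor
        · intro ha
          apply Fin.ext
          have h7 := congrArg Fin.val ha
          simpa using h7
        · intro ha; subst ha; exact Fin.ext rfl
      calc ∑ a, ((Γ0ᵀ * Φ) a i) ^ 2
          = ∑ a : Fin r, (if a = ⟨(i:ℕ), h⟩ then (1:ℝ) else 0) := by
            apply Finset.sum_congr rfl; intro a _
            rw [hB0 a i]
            simp only [hcond a]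
            by_cases ha : a = ⟨(i:ℕ), h⟩ <;> simp [ha]
        _ = 1 := by rw [Finset.sum_ite_eq' _ _ _]; simp
    · rw [if_neg h]
      apply Finset.sum_eq_zero
      intro a _
      rw [hB0 a i, if_neg, zero_pow two_ne_zero]
      intro ha
      have h7 := congrArg Fin.val ha
      simp only [Fin.coe_castLE] at h7
      have := a.isLt
      omega
  -- σ properties
  have hσmono : ∀ i j : ℕ, i ≤ j → σ j ≤ σ i := by
    intro i j hij
    simp only [hσdef]
    by_cases hj : j < ld * np
    · rw [if_pos hj, if_pos (lt_of_le_of_lt hij hj)]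
      exact pow_le_pow_left₀ (hw0 j) (hword i j hij) 2
    · rw [if_neg hj]
      by_cases hi : i < ld * np
      · rw [if_pos hi]; positivity
      · rw [if_neg hi]
  have hσ0 : ∀ i, 0 ≤ σ i := by
    intro i; simp only [hσdef]; by_cases hi : i < ld * np
    · rw [if_pos hi]; positivity
    · rw [if_neg hi]
  constructor
  · exact ⟨Γ0, hΓ0, rfl⟩
  · rintro x ⟨Γt, hΓ, rfl⟩
    rw [master_formula J W V Φ Ψ ω hΨ hSVD Γt, master_formula J W V Φ Ψ ω hΨ hSVD Γ0]
    set B : Matrix (Fin r) (Fin ls) ℝ := Γtᵀ * Φ with hBdef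
    set c : Fin ls → ℝ := fun i => ∑ a, (B a i) ^ 2 with hcdef
    have hBBt : B * Bᵀ = 1 := by
      have h1 : B * Bᵀ = Γtᵀ * (Φ * Φᵀ) * Γt := by
        simp only [hBdef, Matrix.transpose_mul, Matrix.transpose_transpose, Matrix.mul_assoc]
      rw [h1, hΦΦt, Matrix.mul_one, hΓ]
    have hsum : ∑ i, c i = (r : ℝ) := by
      have h1 : ∑ i, c i = ∑ a : Fin r, ∑ i : Fin ls, (B a i) ^ 2 := Finset.sum_comm
      have h2 : ∀ a : Fin r, ∑ i : Fin ls, (B a i) ^ 2 = (B * Bᵀ) a a := by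
        intro a; simp [Matrix.mul_apply, sq]
      rw [h1, Finset.sum_congr rfl (fun a _ => h2 a)]
      have : ∑ a : Fin r, (B * Bᵀ) a a = (B * Bᵀ).trace := rfl
      rw [this, hBBt, Matrix.trace_one]
      simp
    have hc0 : ∀ i, 0 ≤ c i := fun i => Finset.sum_nonneg (fun a _ => sq_nonneg _)
    have hc1 : ∀ i, c i ≤ 1 := by
      intro i
      set P : Matrix (Fin ls) (Fin ls) ℝ := Bᵀ * B with hPdef
      have hP2 : P * P = P := by
        calc P * P = Bᵀ * ((B * Bᵀ) * B) := by simp only [hPdef, Matrix.mul_assoc]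
          _ = Bᵀ * B := by rw [hBBt, Matrix.one_mul]
          _ = P := rfl
      have hPsym : ∀ j k, P j k = P k j := by
        intro j k
        simp only [hPdef, Matrix.mul_apply, Matrix.transpose_apply]
        exact Finset.sum_congr rfl (fun a _ => mul_comm _ _)
      have hcP : c i = P i i := by
        simp [hcdef, hPdef, Matrix.mul_apply, Matrix.transpose_apply, sq]
      have h4 : P i i = ∑ j, (P i j) ^ 2 := by
        have := congrFun (congrFun hP2 i) i
        rw [Matrix.mul_apply] at this
        rw [← this]
        apply Finset.sum_congr rfl
        intro j _
        rw [hPsym j i, sq]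
      have h5 : (P i i) ^ 2 ≤ P i i := by
        calc (P i i) ^ 2 ≤ ∑ j, (P i j) ^ 2 :=
              Finset.single_le_sum (fun j (_ : j ∈ Finset.univ) => sq_nonneg (P i j))
                (Finset.mem_univ i)
          _ = P i i := h4.symm
      have h6 : 0 ≤ P i i := hcP ▸ hc0 i
      nlinarith
    have hbound := ky_fan_bound ls r (Nat.sub_le ls s) σ hσmono hσ0 c hc0 hc1 hsum
    have hcand : ∑ i : Fin ls, (if (i : ℕ) < ld * np then ω i ^ 2 else 0)
        * ∑ a, ((Γ0ᵀ * Φ) a i) ^ 2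
        = ∑ i : Fin ls, σ (i : ℕ) * (if (i : ℕ) < r then 1 else 0) := by
      apply Finset.sum_congr rfl
      intro i _
      rw [hc0val i]
    rw [hcand]
    exact hbound
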